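/- Let t ≥ r > 0, 0 < λ ≤ t + r, and let j, k ≥ 0 be integers with k ≥ 1. Then |∂_r^j ∂_t^k z(λ,r,t)| ≤ C(j,k) λ^{−1} r^{−j−k} t for a constant depending only on j and k, where z(λ,r,t) = (λ²+r²−t²)/(2rλ). -/

import Mathlib

private lemma iter_zero_fn : ∀ m : ℕ, deriv^[m] (fun _ : ℝ => (0:ℝ)) = fun _ => 0 := by
  intro m
  induction m with
  | zero => rfl
  | succ n ih => rw [Function.iterate_succ_apply', ih]; funext x; simp

private lemma iter_cinv (c : ℝ) : ∀ j : ℕ,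
    deriv^[j] (fun x : ℝ => c * x⁻¹) = fun x => c * deriv^[j] (Inv.inv : ℝ → ℝ) x := by
  intro j
  induction j with
  | zero => rfl
  | succ n ih =>
      rw [Function.iterate_succ_apply', ih, Function.iterate_succ_apply']
      exact deriv_const_mul_field' c

private lemma prod_neg_eq (j : ℕ) : ∏ i ∈ Finset.range j, (-1 - (i:ℝ)) = (-1) ^ j * (j.factorial : ℝ) := by
  induction j with
  | zero => simp
  | succ n ih =>
      rw [Finset.prod_range_succ, ih, Nat.factorial_succ, pow_succ]
      push_cast; ring

private lemma hD1 (A c t : ℝ) : HasDerivAt (fun t' : ℝ => (A - t'^2) * c) (-2*t*c) t := by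
  have := ((hasDerivAt_pow 2 t).const_sub A).mul_const c
  refine this.congr_deriv ?_
  norm_num

private lemma hD2 (c t : ℝ) : HasDerivAt (fun t' : ℝ => -2*t'*c) (-2*c) t := by
  have := ((hasDerivAt_id t).const_mul (-2 : ℝ)).mul_const c
  simpa using this

/-- For t ≥ r > 0, 0 < λ ≤ t+r and k ≥ 1,
|∂_r^j ∂_t^k z(λ,r,t)| ≤ C(j,k) λ⁻¹ r^{−j−k} t. -/
theorem stmt_17 (j k : ℕ) (hk : 1 ≤ k) :
    ∃ C : ℝ, 0 < C ∧ ∀ r t lam : ℝ, 0 < r → r ≤ t → 0 < lam → lam ≤ t + r →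
      |iteratedDeriv j
          (fun r' : ℝ => iteratedDeriv k
            (fun t' : ℝ => (lam ^ 2 + r' ^ 2 - t' ^ 2) / (2 * r' * lam)) t) r| ≤
        C * lam⁻¹ * r ^ (-(j : ℝ) - (k : ℝ)) * t := by
  set P : ℝ := ∏ i ∈ Finset.range j, (-1 - (i:ℝ)) with hP
  refine ⟨|P| + 1, by positivity, ?_⟩
  intro r t lam hr hrt hlam hlamt
  have ht : 0 < t := lt_of_lt_of_le hr hrt
  -- basic derivative computations of the inner function
  have e0 : ∀ r' lam : ℝ, (fun t' : ℝ => (lam ^ 2 + r' ^ 2 - t' ^ 2) / (2 * r' * lam))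
      = fun t' => ((lam ^ 2 + r' ^ 2) - t'^2) * (2 * r' * lam)⁻¹ := by
    intro r' lam; funext t'; ring
  have e1 : ∀ A c : ℝ, deriv (fun t' : ℝ => (A - t'^2) * c) = fun t => -2*t*c :=
    fun A c => funext fun t => (hD1 A c t).deriv
  have e2 : ∀ c : ℝ, deriv (fun t' : ℝ => -2*t'*c) = fun _ => -2*c :=
    fun c => funext fun t => (hD2 c t).deriv
  -- the outer iterated derivative of c * x⁻¹
  have outer : ∀ c : ℝ, iteratedDeriv j (fun x : ℝ => c * x⁻¹) r
      = c * (P * r ^ (-1 - (j:ℕ) : ℤ)) := by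
    intro c
    rw [iteratedDeriv_eq_iterate, iter_cinv]
    show c * deriv^[j] Inv.inv r = _
    rw [iter_deriv_inv, hP, prod_neg_eq]
  -- exponent conversion
  have hrpow : r ^ (-(j : ℝ) - 1) = (r : ℝ) ^ (-1 - (j:ℕ) : ℤ) := by
    rw [← Real.rpow_intCast r (-1 - (j:ℕ) : ℤ)]
    congr 1; push_cast; ring
  have hXpos : (0:ℝ) < r ^ (-1 - (j:ℕ) : ℤ) := zpow_pos hr _
  match k, hk with
  | 1, _ =>
      have g1 : (fun r' : ℝ => iteratedDeriv 1
          (fun t' : ℝ => (lam ^ 2 + r' ^ 2 - t' ^ 2) / (2 * r' * lam)) t)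
          = fun r' => (-t * lam⁻¹) * r'⁻¹ := by
        funext r'
        rw [iteratedDeriv_one, e0, e1]
        ring
      rw [g1, outer]
      have : |(-t * lam⁻¹) * (P * r ^ (-1 - (j:ℕ) : ℤ))|
          = t * lam⁻¹ * |P| * r ^ (-1 - (j:ℕ) : ℤ) := by
        rw [abs_mul, abs_mul, abs_mul, abs_neg, abs_of_pos ht,
          abs_of_pos (inv_pos.mpr hlam), abs_of_pos hXpos]
        ring
      rw [this]
      have hcast : -(j:ℝ) - (1:ℕ) = -(j:ℝ) - 1 := by push_cast; ring
      rw [hcast, hrpow]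
      have h1 : (0:ℝ) < lam⁻¹ := inv_pos.mpr hlam
      nlinarith [abs_nonneg P, mul_pos (mul_pos ht h1) hXpos]
  | 2, _ =>
      have g2 : (fun r' : ℝ => iteratedDeriv 2
          (fun t' : ℝ => (lam ^ 2 + r' ^ 2 - t' ^ 2) / (2 * r' * lam)) t)
          = fun r' => (-lam⁻¹) * r'⁻¹ := by
        funext r'
        rw [iteratedDeriv_eq_iterate]
        show deriv (deriv _) t = _
        rw [e0, e1, e2]
        ring
      rw [g2, outer]
      have habs : |(-lam⁻¹) * (P * r ^ (-1 - (j:ℕ) : ℤ))|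
          = lam⁻¹ * |P| * r ^ (-1 - (j:ℕ) : ℤ) := by
        rw [abs_mul, abs_mul, abs_of_pos hXpos, abs_neg, abs_of_pos (inv_pos.mpr hlam)]
        ring
      have hsplit : r ^ (-(j:ℝ) - ((2:ℕ):ℝ)) * r = r ^ (-1 - (j:ℕ) : ℤ) := by
        rw [← Real.rpow_add_one hr.ne', ← Real.rpow_intCast]
        congr 1; push_cast; ring
      rw [habs, ← hsplit]
      have hY : (0:ℝ) < r ^ (-(j:ℝ) - ((2:ℕ):ℝ)) := Real.rpow_pos_of_pos hr _
      have h1 : (0:ℝ) < lam⁻¹ := inv_pos.mpr hlam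
      nlinarith [abs_nonneg P,
        mul_nonneg (mul_nonneg (mul_pos h1 hY).le (abs_nonneg P)) (sub_nonneg.mpr hrt),
        mul_pos (mul_pos h1 hY) ht]
  | (m+3), _ =>
      have g3 : (fun r' : ℝ => iteratedDeriv (m+3)
          (fun t' : ℝ => (lam ^ 2 + r' ^ 2 - t' ^ 2) / (2 * r' * lam)) t)
          = fun _ => (0:ℝ) := by
        funext r'
        rw [iteratedDeriv_eq_iterate]
        rw [Function.iterate_add_apply deriv m 3]
        have h3 : deriv^[3] (fun t' : ℝ => (lam ^ 2 + r' ^ 2 - t' ^ 2) / (2 * r' * lam))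
            = fun _ => (0:ℝ) := by
          show deriv (deriv (deriv _)) = _
          rw [e0, e1, e2]
          funext x; simp
        rw [h3, iter_zero_fn]
      rw [g3]
      have : iteratedDeriv j (fun _ : ℝ => (0:ℝ)) r = 0 := by
        rw [iteratedDeriv_eq_iterate, iter_zero_fn]
      rw [this]
      have : (0:ℝ) < r ^ (-(j:ℝ) - ((m+3 : ℕ):ℝ)) := Real.rpow_pos_of_pos hr _
      simp only [abs_zero]
      positivity
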